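/- arXiv:1710.08848 — 3 statements merged into one kernel-verified Lean document; each statement's English description precedes it below -/
import Mathlib

section
/- Let (r(t),p(t)) be any solution of the disordered harmonic chain dynamics. Define r'_x(t) = p_{x+1}(t)/m_{x+1} − p_x(t)/m_x for 1 ≤ x ≤ N−1 and p'_x(t) = r_x(t) − r_{x−1}(t) for 1 ≤ x ≤ N (with the conventions r_0 = r_N = 0 and r'_0 = r'_N = 0). Then t ↦ (r'(t),p'(t)) is again a solution of the same dynamics, and consequently the quantity I(r,p) = (1/2)[ Σ_{x=1}^N (r_x − r_{x−1})²/m_x + Σ_{x=1}^{N−1} (p_{x+1}/m_{x+1} − p_x/m_x)² ] is constant along every solution. -/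
open Finset

/-- The disordered harmonic chain dynamics on `{1,…,N}`: `r` has components `1 ≤ x ≤ N-1`
(with the convention `r_0 = r_N = 0`) and `p` has components `1 ≤ x ≤ N`. -/
def IsChainSolution (N : ℕ) (m : ℕ → ℝ) (r p : ℝ → ℕ → ℝ) : Prop :=
  (∀ t : ℝ, r t 0 = 0) ∧ (∀ t : ℝ, r t N = 0) ∧
  (∀ (t : ℝ) (x : ℕ), 1 ≤ x → x ≤ N - 1 →
    HasDerivAt (fun s => r s x) (p t (x + 1) / m (x + 1) - p t x / m x) t) ∧
  (∀ (t : ℝ) (x : ℕ), 1 ≤ x → x ≤ N →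
    HasDerivAt (fun s => p s x) (r t x - r t (x - 1)) t)

/-- The conserved quantity
`I(r,p) = (1/2)[ Σ_{x=1}^N (r_x − r_{x−1})²/m_x + Σ_{x=1}^{N−1} (p_{x+1}/m_{x+1} − p_x/m_x)² ]`
(with the conventions `r_0 = r_N = 0`, which hold for configurations coming from the dynamics). -/
noncomputable def chainI (N : ℕ) (m : ℕ → ℝ) (r p : ℕ → ℝ) : ℝ :=
  (1 / 2) * ((∑ x ∈ Finset.Icc 1 N, (r x - r (x - 1)) ^ 2 / m x)
    + ∑ x ∈ Finset.Icc 1 (N - 1), (p (x + 1) / m (x + 1) - p x / m x) ^ 2)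

/-- Summation-by-parts identity. -/
lemma chain_key (m a b : ℕ → ℝ) : ∀ N : ℕ,
    (∑ x ∈ Finset.Icc 1 (N + 1), b x * (a x - a (x - 1)) / m x)
      + ∑ x ∈ Finset.Icc 1 N, a x * (b (x + 1) / m (x + 1) - b x / m x)
    = a (N + 1) * b (N + 1) / m (N + 1) - a 0 * b 1 / m 1 := by
  intro N
  induction N with
  | zero => simp; ring
  | succ n ih =>
    rw [Finset.sum_Icc_succ_top (show (1 : ℕ) ≤ n + 1 + 1 by omega)
        (fun x => b x * (a x - a (x - 1)) / m x),
      Finset.sum_Icc_succ_top (show (1 : ℕ) ≤ n + 1 by omega)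
        (fun x => a x * (b (x + 1) / m (x + 1) - b x / m x))]
    simp only [Nat.add_sub_cancel]
    linear_combination ih

/-- if `(r,p)` solves the disordered harmonic chain dynamics, then the gradient
fields `r'_x = p_{x+1}/m_{x+1} − p_x/m_x` (with `r'_0 = r'_N = 0`) and `p'_x = r_x − r_{x−1}`
again solve the same dynamics, and consequently `I(r(t),p(t))` is constant along every
solution. -/
theorem stmt0 (N : ℕ) (hN : 2 ≤ N) (m : ℕ → ℝ) (hm : ∀ x, 0 < m x)
    (r p : ℝ → ℕ → ℝ) (hsol : IsChainSolution N m r p)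
    (r' p' : ℝ → ℕ → ℝ)
    (hr' : ∀ (t : ℝ) (x : ℕ), r' t x =
      if x = 0 ∨ x = N then 0 else p t (x + 1) / m (x + 1) - p t x / m x)
    (hp' : ∀ (t : ℝ) (x : ℕ), p' t x = r t x - r t (x - 1)) :
    IsChainSolution N m r' p' ∧
      ∀ t s : ℝ, chainI N m (r t) (p t) = chainI N m (r s) (p s) := by
  obtain ⟨h0, hNz, hdr, hdp⟩ := hsol
  -- r' 0 and r' N vanish
  have ha0 : ∀ t, r' t 0 = 0 := fun t => by rw [hr']; simp
  have haN : ∀ t, r' t N = 0 := fun t => by rw [hr']; simp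
  -- derivative of r at any index ≤ N is r'
  have hrq : ∀ (t : ℝ) (x : ℕ), x ≤ N → HasDerivAt (fun s => r s x) (r' t x) t := by
    intro t x hx
    rcases eq_or_ne x 0 with h | h
    · subst h
      rw [ha0]
      have e : (fun s => r s 0) = fun _ : ℝ => (0 : ℝ) := funext fun s => h0 s
      rw [e]; exact hasDerivAt_const t 0
    · rcases eq_or_ne x N with h2 | h2
      · rw [h2, haN]
        have e : (fun s => r s N) = fun _ : ℝ => (0 : ℝ) := funext fun s => hNz s
        rw [e]; exact hasDerivAt_const t 0
      · have : r' t x = p t (x + 1) / m (x + 1) - p t x / m x := by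
          rw [hr', if_neg]; push_neg; exact ⟨h, h2⟩
        rw [this]
        exact hdr t x (by omega) (by omega)
  -- derivative of p is p'
  have hpq : ∀ (t : ℝ) (x : ℕ), 1 ≤ x → x ≤ N → HasDerivAt (fun s => p s x) (p' t x) t := by
    intro t x h1 h2
    rw [hp']
    exact hdp t x h1 h2
  constructor
  · refine ⟨fun t => ha0 t, fun t => haN t, ?_, ?_⟩
    · intro t x h1 h2
      have hx0 : x ≠ 0 := by omega
      have hxN : x ≠ N := by omega
      have e : (fun s => r' s x) = fun s => p s (x + 1) / m (x + 1) - p s x / m x :=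
        funext fun s => by rw [hr', if_neg]; push_neg; exact ⟨hx0, hxN⟩
      rw [e]
      exact ((hpq t (x + 1) (by omega) (by omega)).div_const (m (x + 1))).sub
        ((hpq t x (by omega) (by omega)).div_const (m x))
    · intro t x h1 h2
      have e : (fun s => p' s x) = fun s => r s x - r s (x - 1) := funext fun s => hp' s x
      rw [e]
      exact (hrq t x h2).sub (hrq t (x - 1) (by omega))
  · -- conservation: derivative of chainI along the flow vanishes
    have hF : ∀ t : ℝ, HasDerivAt (fun s => chainI N m (r s) (p s)) 0 t := by
      intro t
      have h1 : HasDerivAt (fun s => ∑ x ∈ Finset.Icc 1 N, (r s x - r s (x - 1)) ^ 2 / m x)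
          (∑ x ∈ Finset.Icc 1 N,
            ((2 : ℕ) : ℝ) * (r t x - r t (x - 1)) ^ (2 - 1) * (r' t x - r' t (x - 1)) / m x)
          t := by
        apply HasDerivAt.fun_sum
        intro x hx
        simp only [Finset.mem_Icc] at hx
        exact (((hrq t x hx.2).sub (hrq t (x - 1) (by omega))).pow 2).div_const (m x)
      have h2 : HasDerivAt
          (fun s => ∑ x ∈ Finset.Icc 1 (N - 1), (p s (x + 1) / m (x + 1) - p s x / m x) ^ 2)
          (∑ x ∈ Finset.Icc 1 (N - 1),
            ((2 : ℕ) : ℝ) * (p t (x + 1) / m (x + 1) - p t x / m x) ^ (2 - 1)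
              * (p' t (x + 1) / m (x + 1) - p' t x / m x)) t := by
        apply HasDerivAt.fun_sum
        intro x hx
        simp only [Finset.mem_Icc] at hx
        exact (((hpq t (x + 1) (by omega) (by omega)).div_const (m (x + 1))).sub
          ((hpq t x (by omega) (by omega)).div_const (m x))).pow 2
      have h := (h1.add h2).const_mul ((1 : ℝ) / 2)
      have hval : ((1 : ℝ) / 2) *
          ((∑ x ∈ Finset.Icc 1 N,
            ((2 : ℕ) : ℝ) * (r t x - r t (x - 1)) ^ (2 - 1) * (r' t x - r' t (x - 1)) / m x)
          + ∑ x ∈ Finset.Icc 1 (N - 1),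
            ((2 : ℕ) : ℝ) * (p t (x + 1) / m (x + 1) - p t x / m x) ^ (2 - 1)
              * (p' t (x + 1) / m (x + 1) - p' t x / m x)) = 0 := by
        have e1 : ∀ x ∈ Finset.Icc 1 N,
            ((2 : ℕ) : ℝ) * (r t x - r t (x - 1)) ^ (2 - 1) * (r' t x - r' t (x - 1)) / m x
            = 2 * (p' t x * (r' t x - r' t (x - 1)) / m x) := by
          intro x hx
          rw [hp' t x]
          norm_num
          ring
        have e2 : ∀ x ∈ Finset.Icc 1 (N - 1),
            ((2 : ℕ) : ℝ) * (p t (x + 1) / m (x + 1) - p t x / m x) ^ (2 - 1)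
              * (p' t (x + 1) / m (x + 1) - p' t x / m x)
            = 2 * (r' t x * (p' t (x + 1) / m (x + 1) - p' t x / m x)) := by
          intro x hx
          simp only [Finset.mem_Icc] at hx
          have : r' t x = p t (x + 1) / m (x + 1) - p t x / m x := by
            rw [hr', if_neg]; push_neg; constructor <;> omega
          rw [this]
          norm_num
          ring
        rw [Finset.sum_congr rfl e1, Finset.sum_congr rfl e2, ← Finset.mul_sum, ← Finset.mul_sum]
        have hkey := chain_key m (r' t) (p' t) (N - 1)
        rw [show N - 1 + 1 = N by omega] at hkey
        rw [show ((1 : ℝ) / 2) *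
            (2 * (∑ x ∈ Finset.Icc 1 N, p' t x * (r' t x - r' t (x - 1)) / m x)
            + 2 * ∑ x ∈ Finset.Icc 1 (N - 1),
                r' t x * (p' t (x + 1) / m (x + 1) - p' t x / m x))
          = (∑ x ∈ Finset.Icc 1 N, p' t x * (r' t x - r' t (x - 1)) / m x)
            + ∑ x ∈ Finset.Icc 1 (N - 1),
                r' t x * (p' t (x + 1) / m (x + 1) - p' t x / m x) from by ring,
          hkey, ha0, haN]
        ring
      rw [hval] at h
      exact h
    intro t s
    exact is_const_of_deriv_eq_zero (fun u => (hF u).differentiableAt)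
      (fun u => (hF u).deriv) t s
end

section
/- There exists a constant C, depending only on β, 𝗋, 𝗉, m₋, m₊ and m̄ (and not on N, on the mass configuration, or on time), such that for every N ≥ 2, every mass configuration with m₋ ≤ m_x ≤ m₊, and every s ≥ 0: Σ_{x=1}^{N−1} r̄_x(s)² ≤ C N, Σ_{x=1}^N p̄_x(s)² ≤ C N, Σ_{x=1}^N (r̄_x(s) − r̄_{x−1}(s))² ≤ C/N (with r̄_0 = r̄_N = 0), and Σ_{x=1}^{N−1} (p̄_{x+1}(s)/m_{x+1} − p̄_x(s)/m_x)² ≤ C/N. -/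
open Finset

lemma sum_Icc_one (g : ℕ → ℝ) (n : ℕ) :
    ∑ x ∈ Icc 1 n, g x = ∑ x ∈ range n, g (x + 1) := by
  induction n with
  | zero => simp
  | succ k ih =>
      rw [Finset.sum_Icc_succ_top (by omega), ih, Finset.sum_range_succ]

/-- Energy conservation for the chain. -/
lemma energy_const (n : ℕ) (m : ℕ → ℝ) (r p : ℝ → ℕ → ℝ)
    (h : IsChainSolution (n + 1) m r p) (t : ℝ) :
    ((∑ x ∈ range (n + 1), (p t (x + 1)) ^ 2 / m (x + 1)) + ∑ x ∈ range n, (r t (x + 1)) ^ 2)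
      = (∑ x ∈ range (n + 1), (p 0 (x + 1)) ^ 2 / m (x + 1)) + ∑ x ∈ range n, (r 0 (x + 1)) ^ 2 := by
  obtain ⟨h0, hN, hr, hp⟩ := h
  have hderiv : ∀ t : ℝ, HasDerivAt
      (fun s => (∑ x ∈ range (n + 1), (p s (x + 1)) ^ 2 / m (x + 1))
        + ∑ x ∈ range n, (r s (x + 1)) ^ 2) 0 t := by
    intro t
    have h1 : HasDerivAt (fun s => ∑ x ∈ range (n + 1), (p s (x + 1)) ^ 2 / m (x + 1))
        (∑ x ∈ range (n + 1),
          ((2 : ℕ) : ℝ) * p t (x + 1) ^ (2 - 1) * (r t (x + 1) - r t (x + 1 - 1)) / m (x + 1)) t := by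
      apply HasDerivAt.fun_sum
      intro x hx
      have hx' := Finset.mem_range.mp hx
      exact ((hp t (x + 1) (by omega) (by omega)).pow 2).div_const (m (x + 1))
    have h2 : HasDerivAt (fun s => ∑ x ∈ range n, (r s (x + 1)) ^ 2)
        (∑ x ∈ range n,
          ((2 : ℕ) : ℝ) * r t (x + 1) ^ (2 - 1)
            * (p t (x + 1 + 1) / m (x + 1 + 1) - p t (x + 1) / m (x + 1))) t := by
      apply HasDerivAt.fun_sum
      intro x hx
      have hx' := Finset.mem_range.mp hx
      exact (hr t (x + 1) (by omega) (by omega)).pow 2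
    have h3 := h1.add h2
    refine h3.congr_deriv ?_
    have e1 : ∀ x ∈ range (n + 1),
        ((2 : ℕ) : ℝ) * p t (x + 1) ^ (2 - 1) * (r t (x + 1) - r t (x + 1 - 1)) / m (x + 1)
          = 2 * (r t (x + 1) * p t (x + 1) / m (x + 1))
            - 2 * (r t x * p t (x + 1) / m (x + 1)) := by
      intro x hx
      simp only [Nat.add_sub_cancel]
      push_cast
      ring
    have e2 : ∀ x ∈ range n,
        ((2 : ℕ) : ℝ) * r t (x + 1) ^ (2 - 1)
            * (p t (x + 1 + 1) / m (x + 1 + 1) - p t (x + 1) / m (x + 1))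
          = 2 * (r t (x + 1) * p t (x + 1 + 1) / m (x + 1 + 1))
            - 2 * (r t (x + 1) * p t (x + 1) / m (x + 1)) := by
      intro x hx
      push_cast
      ring
    rw [Finset.sum_congr rfl e1, Finset.sum_congr rfl e2,
      Finset.sum_sub_distrib, Finset.sum_sub_distrib, Finset.sum_range_succ,
      Finset.sum_range_succ' (fun x => 2 * (r t x * p t (x + 1) / m (x + 1))) n]
    rw [hN t, h0 t]
    ring
  exact is_const_of_deriv_eq_zero (fun u => (hderiv u).differentiableAt)
    (fun u => (hderiv u).deriv) t 0

/-- The time-derivative fields also form a chain solution. -/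
lemma deriv_solution (n : ℕ) (m : ℕ → ℝ) (r p : ℝ → ℕ → ℝ)
    (h : IsChainSolution (n + 1) m r p) :
    IsChainSolution (n + 1) m
      (fun t x => if 1 ≤ x ∧ x ≤ n then p t (x + 1) / m (x + 1) - p t x / m x else 0)
      (fun t x => r t x - r t (x - 1)) := by
  obtain ⟨h0, hN, hr, hp⟩ := h
  set u : ℝ → ℕ → ℝ :=
    fun t x => if 1 ≤ x ∧ x ≤ n then p t (x + 1) / m (x + 1) - p t x / m x else 0 with hu
  have hru : ∀ (t : ℝ) (x : ℕ), x ≤ n + 1 → HasDerivAt (fun s => r s x) (u t x) t := by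
    intro t x hx
    rcases Nat.eq_zero_or_pos x with h0x | h1x
    · subst h0x
      have : (fun s => r s 0) = fun _ => (0 : ℝ) := funext h0
      rw [this, hu]
      simpa using hasDerivAt_const t (0 : ℝ)
    · rcases eq_or_lt_of_le hx with hxe | hxl
      · subst hxe
        have : (fun s => r s (n + 1)) = fun _ => (0 : ℝ) := funext hN
        rw [this, hu]
        have : ¬ (1 ≤ n + 1 ∧ n + 1 ≤ n) := by omega
        simp only [this, if_false]
        exact hasDerivAt_const t (0 : ℝ)
      · have hcond : 1 ≤ x ∧ x ≤ n := ⟨h1x, by omega⟩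
        have := hr t x h1x (by omega)
        rw [hu]
        simp only [hcond, and_self, if_true]
        exact this
  refine ⟨?_, ?_, ?_, ?_⟩
  · intro t; simp [hu]
  · intro t; rw [hu]; simp only; rw [if_neg (by omega)]
  · intro t x hx1 hx2
    have hx2' : x ≤ n := by omega
    have hdx := (hp t (x + 1) (by omega) (by omega)).div_const (m (x + 1))
    have hdx' := (hp t x (by omega) (by omega)).div_const (m x)
    have hmain := hdx.sub hdx'
    have hcond : 1 ≤ x ∧ x ≤ n := ⟨hx1, hx2'⟩
    have hfun : (fun s => u s x) = fun s => p s (x + 1) / m (x + 1) - p s x / m x := by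
      funext s; rw [hu]; simp only [hcond, and_self, if_true]
    rw [hfun]
    exact hmain
  · intro t x hx1 hx2
    have hdx := hru t x (by omega)
    have hdx' := hru t (x - 1) (by omega)
    exact hdx.sub hdx'

set_option maxHeartbeats 1000000 in
/-- a priori `L²` and `H¹` bounds on the averaged fields, uniformly in `N`, in
the mass configuration and in time. -/
theorem stmt1 (β rr pp : ℝ → ℝ)
    (hβc : ContinuousOn β (Set.Icc 0 1)) (hβpos : ∀ y ∈ Set.Icc (0:ℝ) 1, 0 < β y)
    (hrrc : ContDiffOn ℝ 1 rr (Set.Icc 0 1)) (hrr0 : rr 0 = 0) (hrr1 : rr 1 = 0)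
    (hppc : ContDiffOn ℝ 1 pp (Set.Icc 0 1))
    (mminus mplus mbar : ℝ) (hm0 : 0 < mminus) (hmm : mminus ≤ mplus) (hmb : 0 < mbar) :
    ∃ C : ℝ, ∀ N : ℕ, 2 ≤ N → ∀ m : ℕ → ℝ,
      (∀ x : ℕ, m x ∈ Set.Icc mminus mplus) →
      ∀ r p : ℝ → ℕ → ℝ, IsChainSolution N m r p →
      (∀ x : ℕ, 1 ≤ x → x ≤ N - 1 → r 0 x = rr ((x : ℝ) / N)) →
      (∀ x : ℕ, 1 ≤ x → x ≤ N → p 0 x = m x * pp ((x : ℝ) / N) / mbar) →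
      ∀ s : ℝ, 0 ≤ s →
        (∑ x ∈ Finset.Icc 1 (N - 1), (r s x) ^ 2 ≤ C * N) ∧
        (∑ x ∈ Finset.Icc 1 N, (p s x) ^ 2 ≤ C * N) ∧
        (∑ x ∈ Finset.Icc 1 N, (r s x - r s (x - 1)) ^ 2 ≤ C / N) ∧
        (∑ x ∈ Finset.Icc 1 (N - 1), (p s (x + 1) / m (x + 1) - p s x / m x) ^ 2 ≤ C / N) := by
  -- bounds for rr, pp and their derivatives
  obtain ⟨Mr, hMr⟩ := isCompact_Icc.exists_bound_of_continuousOn hrrc.continuousOn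
  obtain ⟨Mp, hMp⟩ := isCompact_Icc.exists_bound_of_continuousOn hppc.continuousOn
  obtain ⟨Lr, hLr⟩ := isCompact_Icc.exists_bound_of_continuousOn
    (hrrc.continuousOn_derivWithin (uniqueDiffOn_Icc zero_lt_one) le_rfl)
  obtain ⟨Lp, hLp⟩ := isCompact_Icc.exists_bound_of_continuousOn
    (hppc.continuousOn_derivWithin (uniqueDiffOn_Icc zero_lt_one) le_rfl)
  have hMr0 : 0 ≤ Mr := le_trans (norm_nonneg _) (hMr 0 (by norm_num))
  have hMp0 : 0 ≤ Mp := le_trans (norm_nonneg _) (hMp 0 (by norm_num))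
  have hLr0 : 0 ≤ Lr := le_trans (norm_nonneg _) (hLr 0 (by norm_num))
  have hLp0 : 0 ≤ Lp := le_trans (norm_nonneg _) (hLp 0 (by norm_num))
  have hrrLip : ∀ a b : ℝ, a ∈ Set.Icc (0:ℝ) 1 → b ∈ Set.Icc (0:ℝ) 1 →
      |rr b - rr a| ≤ Lr * |b - a| := by
    intro a b ha hb
    have := Convex.norm_image_sub_le_of_norm_derivWithin_le
      (hrrc.differentiableOn one_ne_zero) hLr (convex_Icc 0 1) ha hb
    simpa [Real.norm_eq_abs] using this
  have hppLip : ∀ a b : ℝ, a ∈ Set.Icc (0:ℝ) 1 → b ∈ Set.Icc (0:ℝ) 1 →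
      |pp b - pp a| ≤ Lp * |b - a| := by
    intro a b ha hb
    have := Convex.norm_image_sub_le_of_norm_derivWithin_le
      (hppc.differentiableOn one_ne_zero) hLp (convex_Icc 0 1) ha hb
    simpa [Real.norm_eq_abs] using this
  set C1 : ℝ := mplus * Mp ^ 2 / mbar ^ 2 + Mr ^ 2 with hC1
  set C2 : ℝ := Lr ^ 2 / mminus + Lp ^ 2 / mbar ^ 2 with hC2
  have hmplus : 0 < mplus := lt_of_lt_of_le hm0 hmm
  have hC1nn : 0 ≤ C1 := by positivity
  have hC2nn : 0 ≤ C2 := by positivity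
  refine ⟨(1 + mplus) * (C1 + C2), ?_⟩
  intro N hN m hmbd r p hsol hr0 hp0 s hs
  obtain ⟨n, rfl⟩ : ∃ n, N = n + 1 := ⟨N - 1, by omega⟩
  have hn1 : 1 ≤ n := by omega
  have hNpos : (0:ℝ) < (n:ℝ) + 1 := by positivity
  have hNcast : ((n + 1 : ℕ) : ℝ) = (n : ℝ) + 1 := by push_cast; ring
  have hmpos : ∀ x, 0 < m x := fun x => lt_of_lt_of_le hm0 (hmbd x).1
  -- initial data for r at all indices 0 ≤ x ≤ n+1
  have hr0' : ∀ x : ℕ, x ≤ n + 1 → r 0 x = rr ((x : ℝ) / ((n:ℝ) + 1)) := by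
    intro x hx
    rcases Nat.eq_zero_or_pos x with h0x | h1x
    · subst h0x; simp [hsol.1 0, hrr0]
    · rcases eq_or_lt_of_le hx with hxe | hxl
      · subst hxe
        rw [hsol.2.1 0]
        rw [show ((n + 1 : ℕ) : ℝ) / ((n:ℝ) + 1) = 1 by push_cast; field_simp]
        exact hrr1.symm
      · have := hr0 x h1x (by omega)
        rw [this, hNcast]
  have hmem : ∀ y : ℝ, 0 ≤ y → y ≤ (n:ℝ) + 1 → y / ((n:ℝ)+1) ∈ Set.Icc (0:ℝ) 1 := by
    intro y h0 h1
    constructor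
    · positivity
    · rw [div_le_one hNpos]; exact h1
  -- the derivative solution
  set u : ℝ → ℕ → ℝ :=
    fun t x => if 1 ≤ x ∧ x ≤ n then p t (x + 1) / m (x + 1) - p t x / m x else 0 with hu
  set q : ℝ → ℕ → ℝ := fun t x => r t x - r t (x - 1) with hq
  have hsol2 : IsChainSolution (n + 1) m u q := deriv_solution n m r p hsol
  -- energy identities
  have hE1 := energy_const n m r p hsol s
  have hE2 := energy_const n m u q hsol2 s
  -- initial energy bounds
  have hstep : ∀ x : ℕ, x ≤ n → |rr (((x:ℝ)+1) / ((n:ℝ)+1)) - rr ((x:ℝ) / ((n:ℝ)+1))|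
      ≤ Lr / ((n:ℝ)+1) := by
    intro x hx
    have hxn : (x:ℝ) ≤ (n:ℝ) := Nat.cast_le.mpr hx
    have h1 := hrrLip ((x:ℝ)/((n:ℝ)+1)) (((x:ℝ)+1)/((n:ℝ)+1))
      (hmem (x:ℝ) (by positivity) (by linarith)) (hmem ((x:ℝ)+1) (by positivity) (by linarith))
    have : (((x:ℝ)+1)/((n:ℝ)+1) - (x:ℝ)/((n:ℝ)+1)) = 1/((n:ℝ)+1) := by field_simp; ring
    rw [this] at h1
    calc |rr (((x:ℝ)+1) / ((n:ℝ)+1)) - rr ((x:ℝ) / ((n:ℝ)+1))| ≤ Lr * |1/((n:ℝ)+1)| := h1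
      _ = Lr / ((n:ℝ)+1) := by rw [abs_of_pos (by positivity)]; ring
  have hstepp : ∀ x : ℕ, x ≤ n → |pp (((x:ℝ)+1) / ((n:ℝ)+1)) - pp ((x:ℝ) / ((n:ℝ)+1))|
      ≤ Lp / ((n:ℝ)+1) := by
    intro x hx
    have hxn : (x:ℝ) ≤ (n:ℝ) := Nat.cast_le.mpr hx
    have h1 := hppLip ((x:ℝ)/((n:ℝ)+1)) (((x:ℝ)+1)/((n:ℝ)+1))
      (hmem (x:ℝ) (by positivity) (by linarith)) (hmem ((x:ℝ)+1) (by positivity) (by linarith))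
    have : (((x:ℝ)+1)/((n:ℝ)+1) - (x:ℝ)/((n:ℝ)+1)) = 1/((n:ℝ)+1) := by field_simp; ring
    rw [this] at h1
    calc |pp (((x:ℝ)+1) / ((n:ℝ)+1)) - pp ((x:ℝ) / ((n:ℝ)+1))| ≤ Lp * |1/((n:ℝ)+1)| := h1
      _ = Lp / ((n:ℝ)+1) := by rw [abs_of_pos (by positivity)]; ring
  -- bound on initial energy E(0)
  have hE10 : (∑ x ∈ range (n + 1), (p 0 (x + 1)) ^ 2 / m (x + 1))
      + ∑ x ∈ range n, (r 0 (x + 1)) ^ 2 ≤ C1 * ((n:ℝ) + 1) := by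
    have hb1 : ∀ x ∈ range (n + 1), (p 0 (x + 1)) ^ 2 / m (x + 1) ≤ mplus * Mp ^ 2 / mbar ^ 2 := by
      intro x hx
      have hx' := Finset.mem_range.mp hx
      have hmx := hmbd (x + 1)
      have hmxpos := hmpos (x + 1)
      rw [hp0 (x + 1) (by omega) (by omega)]
      have hym : ((x + 1 : ℕ) : ℝ) / ((n + 1 : ℕ) : ℝ) ∈ Set.Icc (0:ℝ) 1 := by
        push_cast
        exact hmem ((x:ℝ)+1) (by positivity) (by
          have : (x:ℝ) ≤ (n:ℝ) := Nat.cast_le.mpr (by omega)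
          linarith)
      have hppb : |pp (((x + 1 : ℕ):ℝ) / ((n + 1 : ℕ):ℝ))| ≤ Mp := by
        simpa [Real.norm_eq_abs] using hMp _ hym
      set y : ℝ := ((x + 1 : ℕ):ℝ) / ((n + 1 : ℕ):ℝ)
      have heq : (m (x+1) * pp y / mbar) ^ 2 / m (x+1) = m (x+1) * pp y ^ 2 / mbar ^ 2 := by
        field_simp
      rw [heq]
      have hpp2 : pp y ^ 2 ≤ Mp ^ 2 := by
        rw [← sq_abs]; exact pow_le_pow_left₀ (abs_nonneg _) hppb 2
      gcongr
      exact hmx.2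
    have hb2 : ∀ x ∈ range n, (r 0 (x + 1)) ^ 2 ≤ Mr ^ 2 := by
      intro x hx
      have hx' := Finset.mem_range.mp hx
      rw [hr0' (x + 1) (by omega)]
      have hym : ((x + 1 : ℕ):ℝ) / ((n:ℝ) + 1) ∈ Set.Icc (0:ℝ) 1 := by
        push_cast
        exact hmem ((x:ℝ)+1) (by positivity) (by
          have : (x:ℝ) ≤ (n:ℝ) := Nat.cast_le.mpr (by omega)
          linarith)
      have hb := hMr _ hym
      rw [← sq_abs]
      exact pow_le_pow_left₀ (abs_nonneg _) (by simpa [Real.norm_eq_abs] using hb) 2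
    calc (∑ x ∈ range (n + 1), (p 0 (x + 1)) ^ 2 / m (x + 1)) + ∑ x ∈ range n, (r 0 (x + 1)) ^ 2
        ≤ (∑ _x ∈ range (n + 1), mplus * Mp ^ 2 / mbar ^ 2) + ∑ _x ∈ range n, Mr ^ 2 :=
          add_le_add (Finset.sum_le_sum hb1) (Finset.sum_le_sum hb2)
      _ = ((n:ℝ) + 1) * (mplus * Mp ^ 2 / mbar ^ 2) + (n:ℝ) * Mr ^ 2 := by
          simp only [Finset.sum_const, Finset.card_range, nsmul_eq_mul]
          push_cast
          ring
      _ ≤ ((n:ℝ) + 1) * (mplus * Mp ^ 2 / mbar ^ 2) + ((n:ℝ) + 1) * Mr ^ 2 :=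
          add_le_add le_rfl
            (mul_le_mul_of_nonneg_right (by linarith : (n:ℝ) ≤ (n:ℝ) + 1) (sq_nonneg Mr))
      _ = C1 * ((n:ℝ) + 1) := by rw [hC1]; ring
  -- bound on initial energy E2(0)
  have hq0 : ∀ x : ℕ, x ≤ n → |q 0 (x + 1)| ≤ Lr / ((n:ℝ) + 1) := by
    intro x hx
    rw [hq]
    simp only [Nat.add_sub_cancel]
    rw [hr0' (x + 1) (by omega), hr0' x (by omega)]
    have h5 := hstep x hx
    push_cast
    convert h5 using 3
  have hu0 : ∀ x : ℕ, x < n → |u 0 (x + 1)| ≤ Lp / (mbar * ((n:ℝ) + 1)) := by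
    intro x hx
    rw [hu]
    have hcond : 1 ≤ x + 1 ∧ x + 1 ≤ n := ⟨by omega, by omega⟩
    simp only [hcond, and_self, if_true]
    rw [hp0 (x + 1 + 1) (by omega) (by omega), hp0 (x + 1) (by omega) (by omega)]
    have e : ∀ (a b : ℝ), b ≠ 0 → b * a / mbar / b = a / mbar := by
      intro a b hb; field_simp
    rw [e _ _ (hmpos (x + 1 + 1)).ne', e _ _ (hmpos (x + 1)).ne', div_sub_div_same,
      abs_div, abs_of_pos hmb]
    have h5 := hstepp (x + 1) (by omega)
    push_cast at h5 ⊢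
    have h6 : |pp (((x:ℝ) + 1 + 1) / ((n:ℝ) + 1)) - pp (((x:ℝ) + 1) / ((n:ℝ) + 1))|
        ≤ Lp / ((n:ℝ) + 1) := h5
    rw [show Lp / (mbar * ((n:ℝ) + 1)) = (Lp / ((n:ℝ) + 1)) / mbar by
      rw [div_div]; ring_nf]
    gcongr
  have hE20 : (∑ x ∈ range (n + 1), (q 0 (x + 1)) ^ 2 / m (x + 1))
      + ∑ x ∈ range n, (u 0 (x + 1)) ^ 2 ≤ C2 / ((n:ℝ) + 1) := by
    have hb1 : ∀ x ∈ range (n + 1), (q 0 (x + 1)) ^ 2 / m (x + 1)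
        ≤ (Lr / ((n:ℝ)+1)) ^ 2 / mminus := by
      intro x hx
      have hx' := Finset.mem_range.mp hx
      have hqb : (q 0 (x + 1)) ^ 2 ≤ (Lr / ((n:ℝ)+1)) ^ 2 := by
        rw [← sq_abs]
        exact pow_le_pow_left₀ (abs_nonneg _) (hq0 x (by omega)) 2
      have := hmpos (x + 1)
      calc (q 0 (x + 1)) ^ 2 / m (x + 1) ≤ (q 0 (x + 1)) ^ 2 / mminus := by
            gcongr
            exact (hmbd (x+1)).1
        _ ≤ (Lr / ((n:ℝ)+1)) ^ 2 / mminus := by gcongr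
    have hb2 : ∀ x ∈ range n, (u 0 (x + 1)) ^ 2 ≤ (Lp / (mbar * ((n:ℝ)+1))) ^ 2 := by
      intro x hx
      have hx' := Finset.mem_range.mp hx
      rw [← sq_abs]
      exact pow_le_pow_left₀ (abs_nonneg _) (hu0 x (by omega)) 2
    calc (∑ x ∈ range (n + 1), (q 0 (x + 1)) ^ 2 / m (x + 1)) + ∑ x ∈ range n, (u 0 (x + 1)) ^ 2
        ≤ (∑ _x ∈ range (n + 1), (Lr / ((n:ℝ)+1)) ^ 2 / mminus)
          + ∑ _x ∈ range n, (Lp / (mbar * ((n:ℝ)+1))) ^ 2 :=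
          add_le_add (Finset.sum_le_sum hb1) (Finset.sum_le_sum hb2)
      _ = ((n:ℝ)+1) * ((Lr / ((n:ℝ)+1)) ^ 2 / mminus) + (n:ℝ) * (Lp / (mbar * ((n:ℝ)+1))) ^ 2 := by
          simp only [Finset.sum_const, Finset.card_range, nsmul_eq_mul]
          push_cast
          ring
      _ ≤ ((n:ℝ)+1) * ((Lr / ((n:ℝ)+1)) ^ 2 / mminus) + ((n:ℝ)+1) * (Lp / (mbar * ((n:ℝ)+1))) ^ 2 :=
          add_le_add le_rfl
            (mul_le_mul_of_nonneg_right (by linarith : (n:ℝ) ≤ (n:ℝ) + 1) (sq_nonneg _))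
      _ = Lr ^ 2 / (mminus * ((n:ℝ)+1)) + Lp ^ 2 / (mbar ^ 2 * ((n:ℝ)+1)) := by
          field_simp
      _ = C2 / ((n:ℝ)+1) := by rw [hC2]; field_simp
  -- nonnegativity of energy parts
  have hqterm_nn : ∀ (v : ℝ → ℕ → ℝ) (t : ℝ), (0:ℝ) ≤ ∑ x ∈ range (n + 1), (v t (x + 1)) ^ 2 / m (x + 1) :=
    fun v t => Finset.sum_nonneg fun x _ => div_nonneg (sq_nonneg _) (hmpos (x+1)).le
  have hrterm_nn : ∀ (v : ℝ → ℕ → ℝ) (t : ℝ), (0:ℝ) ≤ ∑ x ∈ range n, (v t (x + 1)) ^ 2 :=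
    fun v t => Finset.sum_nonneg fun x _ => sq_nonneg _
  -- convert the four sums
  have hsum1 : ∑ x ∈ Finset.Icc 1 (n + 1 - 1), (r s x) ^ 2 = ∑ x ∈ range n, (r s (x + 1)) ^ 2 := by
    rw [show n + 1 - 1 = n from rfl, sum_Icc_one]
  have hsum2 : ∑ x ∈ Finset.Icc 1 (n + 1), (p s x) ^ 2 = ∑ x ∈ range (n + 1), (p s (x + 1)) ^ 2 := by
    rw [sum_Icc_one]
  have hsum3 : ∑ x ∈ Finset.Icc 1 (n + 1), (r s x - r s (x - 1)) ^ 2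
      = ∑ x ∈ range (n + 1), (q s (x + 1)) ^ 2 := by
    rw [sum_Icc_one]
  have hsum4 : ∑ x ∈ Finset.Icc 1 (n + 1 - 1), (p s (x + 1) / m (x + 1) - p s x / m x) ^ 2
      = ∑ x ∈ range n, (u s (x + 1)) ^ 2 := by
    rw [show n + 1 - 1 = n from rfl, sum_Icc_one]
    apply Finset.sum_congr rfl
    intro x hx
    have hx' := Finset.mem_range.mp hx
    rw [hu]
    have hcond : 1 ≤ x + 1 ∧ x + 1 ≤ n := ⟨by omega, by omega⟩
    simp only [hcond, and_self, if_true]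
  set C : ℝ := (1 + mplus) * (C1 + C2) with hCdef
  have hCc1 : C1 ≤ C := by nlinarith
  have hCc2 : mplus * C1 ≤ C := by nlinarith
  have hCc3 : C2 ≤ C := by nlinarith
  have hCc4 : mplus * C2 ≤ C := by nlinarith
  have hEs_r : ∑ x ∈ range n, (r s (x + 1)) ^ 2 ≤ C1 * ((n:ℝ) + 1) := by
    have h3 := hqterm_nn p s
    have h5 : ∑ x ∈ range n, r s (x + 1) ^ 2
        ≤ ∑ x ∈ range (n + 1), p s (x + 1) ^ 2 / m (x + 1) + ∑ x ∈ range n, r s (x + 1) ^ 2 :=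
      le_add_of_nonneg_left h3
    rw [hE1] at h5
    exact h5.trans hE10
  have hEs_p : ∑ x ∈ range (n + 1), (p s (x + 1)) ^ 2 ≤ mplus * (C1 * ((n:ℝ) + 1)) := by
    have hterm : ∀ x ∈ range (n + 1), (p s (x + 1)) ^ 2 ≤ mplus * ((p s (x + 1)) ^ 2 / m (x + 1)) := by
      intro x _
      have hmx := hmpos (x + 1)
      calc (p s (x+1))^2 = (p s (x+1))^2 / m (x+1) * m (x+1) :=
            (div_mul_cancel₀ _ hmx.ne').symm
        _ ≤ (p s (x+1))^2 / m (x+1) * mplus :=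
            mul_le_mul_of_nonneg_left (hmbd (x+1)).2 (div_nonneg (sq_nonneg _) hmx.le)
        _ = mplus * ((p s (x+1))^2 / m (x+1)) := mul_comm _ _
    calc ∑ x ∈ range (n + 1), (p s (x + 1)) ^ 2
        ≤ ∑ x ∈ range (n + 1), mplus * ((p s (x + 1)) ^ 2 / m (x + 1)) := Finset.sum_le_sum hterm
      _ = mplus * ∑ x ∈ range (n + 1), (p s (x + 1)) ^ 2 / m (x + 1) := by rw [Finset.mul_sum]
      _ ≤ mplus * (C1 * ((n:ℝ) + 1)) := by
          apply mul_le_mul_of_nonneg_left _ hmplus.le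
          have := hrterm_nn r s
          linarith [hE1, hE10]
  have hEs_q : ∑ x ∈ range (n + 1), (q s (x + 1)) ^ 2 ≤ mplus * (C2 / ((n:ℝ) + 1)) := by
    have hterm : ∀ x ∈ range (n + 1), (q s (x + 1)) ^ 2 ≤ mplus * ((q s (x + 1)) ^ 2 / m (x + 1)) := by
      intro x _
      have hmx := hmpos (x + 1)
      calc (q s (x+1))^2 = (q s (x+1))^2 / m (x+1) * m (x+1) :=
            (div_mul_cancel₀ _ hmx.ne').symm
        _ ≤ (q s (x+1))^2 / m (x+1) * mplus :=
            mul_le_mul_of_nonneg_left (hmbd (x+1)).2 (div_nonneg (sq_nonneg _) hmx.le)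
        _ = mplus * ((q s (x+1))^2 / m (x+1)) := mul_comm _ _
    calc ∑ x ∈ range (n + 1), (q s (x + 1)) ^ 2
        ≤ ∑ x ∈ range (n + 1), mplus * ((q s (x + 1)) ^ 2 / m (x + 1)) := Finset.sum_le_sum hterm
      _ = mplus * ∑ x ∈ range (n + 1), (q s (x + 1)) ^ 2 / m (x + 1) := by rw [Finset.mul_sum]
      _ ≤ mplus * (C2 / ((n:ℝ) + 1)) := by
          apply mul_le_mul_of_nonneg_left _ hmplus.le
          have := hrterm_nn u s
          linarith [hE2, hE20]
  have hEs_u : ∑ x ∈ range n, (u s (x + 1)) ^ 2 ≤ C2 / ((n:ℝ) + 1) := by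
    have := hqterm_nn q s
    linarith [hE2, hE20]
  refine ⟨?_, ?_, ?_, ?_⟩
  · rw [hsum1, hNcast]
    calc ∑ x ∈ range n, (r s (x + 1)) ^ 2 ≤ C1 * ((n:ℝ) + 1) := hEs_r
      _ ≤ C * ((n:ℝ) + 1) := mul_le_mul_of_nonneg_right hCc1 hNpos.le
  · rw [hsum2, hNcast]
    calc ∑ x ∈ range (n+1), (p s (x + 1)) ^ 2 ≤ mplus * (C1 * ((n:ℝ) + 1)) := hEs_p
      _ = (mplus * C1) * ((n:ℝ) + 1) := by ring
      _ ≤ C * ((n:ℝ) + 1) := mul_le_mul_of_nonneg_right hCc2 hNpos.le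
  · rw [hsum3, hNcast]
    calc ∑ x ∈ range (n+1), (q s (x + 1)) ^ 2 ≤ mplus * (C2 / ((n:ℝ) + 1)) := hEs_q
      _ = (mplus * C2) / ((n:ℝ) + 1) := by ring
      _ ≤ C / ((n:ℝ) + 1) := by gcongr
  · rw [hsum4, hNcast]
    calc ∑ x ∈ range n, (u s (x + 1)) ^ 2 ≤ C2 / ((n:ℝ) + 1) := hEs_u
      _ ≤ C / ((n:ℝ) + 1) := by gcongr
end

section
/- There exists a constant C, depending only on β, 𝗋, 𝗉, m₋, m₊ and m̄, such that for every N ≥ 2, every mass configuration with m₋ ≤ m_x ≤ m₊, every s ≥ 0 and all indices 1 ≤ x ≤ x' ≤ N: |r̄_{x'}(s) − r̄_x(s)| ≤ C (|x'−x|/N)^{1/2} (for x, x' ≤ N−1), |p̄_{x'}(s)/m_{x'} − p̄_x(s)/m_x| ≤ C (|x'−x|/N)^{1/2}, and moreover |r̄_x(s)| ≤ C and |p̄_x(s)| ≤ C for all x. -/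
open Finset

namespace Stmt2Aux

/-- Difference of velocities field (with boundary convention zero). -/
noncomputable def Bq (N : ℕ) (m : ℕ → ℝ) (p : ℝ → ℕ → ℝ) (t : ℝ) (x : ℕ) : ℝ :=
  if 1 ≤ x ∧ x ≤ N - 1 then p t (x + 1) / m (x + 1) - p t x / m x else 0

/-- Difference of stretch field. -/
noncomputable def Ar (r : ℝ → ℕ → ℝ) (t : ℝ) (x : ℕ) : ℝ := r t x - r t (x - 1)

/-- The conserved Dirichlet-type energy. -/
noncomputable def Dfun (N : ℕ) (m : ℕ → ℝ) (r p : ℝ → ℕ → ℝ) (t : ℝ) : ℝ :=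
  ∑ x ∈ range N, (Ar r t (x + 1)) ^ 2 / m (x + 1) +
    ∑ x ∈ range (N - 1), (Bq N m p t (x + 1)) ^ 2

theorem hA (N : ℕ) (m : ℕ → ℝ) (r p : ℝ → ℕ → ℝ) (hN : 2 ≤ N)
    (hsol : IsChainSolution N m r p) (t : ℝ) (x : ℕ) (hx1 : 1 ≤ x) (hxN : x ≤ N) :
    HasDerivAt (fun s => Ar r s x) (Bq N m p t x - Bq N m p t (x - 1)) t := by
  obtain ⟨h0, hNr, hr, hp⟩ := hsol
  have d1 : HasDerivAt (fun s => r s x) (Bq N m p t x) t := by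
    rcases le_or_gt x (N - 1) with h | h
    · have := hr t x hx1 h
      rw [Bq, if_pos ⟨hx1, h⟩]
      exact this
    · have hxeq : x = N := by omega
      subst hxeq
      rw [Bq, if_neg (by omega)]
      exact (hasDerivAt_const t (0 : ℝ)).congr_of_eventuallyEq
        (Filter.Eventually.of_forall fun s => hNr s)
  have d2 : HasDerivAt (fun s => r s (x - 1)) (Bq N m p t (x - 1)) t := by
    rcases eq_or_lt_of_le hx1 with h | h
    · have hx0 : x - 1 = 0 := by omega
      rw [hx0, Bq, if_neg (by omega)]
      exact (hasDerivAt_const t (0 : ℝ)).congr_of_eventuallyEq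
        (Filter.Eventually.of_forall fun s => h0 s)
    · have h1 : 1 ≤ x - 1 := by omega
      have h2 : x - 1 ≤ N - 1 := by omega
      have := hr t (x - 1) h1 h2
      have hxx : x - 1 + 1 = x := by omega
      rw [hxx] at this
      rw [Bq, if_pos ⟨h1, h2⟩, hxx]
      exact this
  exact d1.sub d2

theorem hB (N : ℕ) (m : ℕ → ℝ) (r p : ℝ → ℕ → ℝ) (hN : 2 ≤ N)
    (hsol : IsChainSolution N m r p) (t : ℝ) (x : ℕ) (hx1 : 1 ≤ x) (hxN : x ≤ N - 1) :
    HasDerivAt (fun s => Bq N m p s x) (Ar r t (x + 1) / m (x + 1) - Ar r t x / m x) t := by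
  have e : (fun s => Bq N m p s x) = fun s => p s (x + 1) / m (x + 1) - p s x / m x := by
    funext s; rw [Bq, if_pos ⟨hx1, hxN⟩]
  rw [e]
  have dp1 := (hsol.2.2.2 t (x + 1) (by omega) (by omega)).div_const (m (x + 1))
  have dp2 := (hsol.2.2.2 t x (by omega) (by omega)).div_const (m x)
  have h := dp1.fun_sub dp2
  simpa [Ar, Nat.add_sub_cancel] using h

end Stmt2Aux
open Finset

theorem const_of_hasDerivAt_zero (f : ℝ → ℝ) (h : ∀ t, HasDerivAt f 0 t) (s : ℝ) :
    f s = f 0 :=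
  is_const_of_deriv_eq_zero (fun t => (h t).differentiableAt) (fun t => (h t).deriv) s 0
namespace Stmt2Aux

theorem Pconst (N : ℕ) (m : ℕ → ℝ) (r p : ℝ → ℕ → ℝ) (hN : 2 ≤ N)
    (hsol : IsChainSolution N m r p) (s : ℝ) :
    ∑ x ∈ range N, p s (x + 1) = ∑ x ∈ range N, p 0 (x + 1) := by
  refine const_of_hasDerivAt_zero (fun u => ∑ x ∈ range N, p u (x + 1)) ?_ s
  intro t
  have h := HasDerivAt.fun_sum (fun x (hx : x ∈ range N) =>
    hsol.2.2.2 t (x + 1) (by omega) (by simp only [mem_range] at hx; omega))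
  convert h using 1
  · rfl
  · rfl
  have htel : ∑ x ∈ range N, (r t (x + 1) - r t (x + 1 - 1)) =
      ∑ x ∈ range N, (r t (x + 1) - r t x) := by
    simp [Nat.add_sub_cancel]
  rw [htel, Finset.sum_range_sub (f := fun x => r t x) N, hsol.1, hsol.2.1]
  ring

theorem Dconst (N : ℕ) (m : ℕ → ℝ) (r p : ℝ → ℕ → ℝ) (hN : 2 ≤ N)
    (hsol : IsChainSolution N m r p) (s : ℝ) :
    Dfun N m r p s = Dfun N m r p 0 := by
  obtain ⟨M, rfl⟩ : ∃ M, N = M + 2 := ⟨N - 2, by omega⟩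
  apply const_of_hasDerivAt_zero
  intro t
  have h1 : HasDerivAt (fun t => ∑ x ∈ range (M + 2), (Ar r t (x + 1)) ^ 2 / m (x + 1))
      (∑ x ∈ range (M + 2),
        (2 * Ar r t (x + 1) * (Bq (M + 2) m p t (x + 1) - Bq (M + 2) m p t x)) / m (x + 1)) t := by
    apply HasDerivAt.fun_sum
    intro x hx
    have := ((hA (M + 2) m r p hN hsol t (x + 1) (by omega) (by
      simp only [mem_range] at hx; omega)).pow 2).div_const (m (x + 1))
    simpa [Nat.add_sub_cancel, mul_assoc] using this
  have h2 : HasDerivAt (fun t => ∑ x ∈ range (M + 1), (Bq (M + 2) m p t (x + 1)) ^ 2)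
      (∑ x ∈ range (M + 1),
        2 * Bq (M + 2) m p t (x + 1) *
          (Ar r t (x + 2) / m (x + 2) - Ar r t (x + 1) / m (x + 1))) t := by
    apply HasDerivAt.fun_sum
    intro x hx
    have := (hB (M + 2) m r p hN hsol t (x + 1) (by omega) (by
      simp only [mem_range] at hx; omega)).fun_pow 2
    simpa [mul_assoc, show x + 1 + 1 = x + 2 from rfl] using this
  have hh := h1.add h2
  have hzero :
      (∑ x ∈ range (M + 2),
        (2 * Ar r t (x + 1) * (Bq (M + 2) m p t (x + 1) - Bq (M + 2) m p t x)) / m (x + 1)) +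
      (∑ x ∈ range (M + 1),
        2 * Bq (M + 2) m p t (x + 1) *
          (Ar r t (x + 2) / m (x + 2) - Ar r t (x + 1) / m (x + 1))) = 0 := by
    have hBtop : Bq (M + 2) m p t (M + 2) = 0 := if_neg (by omega)
    have hB0 : Bq (M + 2) m p t 0 = 0 := if_neg (by omega)
    set F : ℕ → ℝ := fun x => 2 * Ar r t (x + 1) * Bq (M + 2) m p t (x + 1) / m (x + 1) with hF
    set G : ℕ → ℝ := fun x => 2 * Ar r t (x + 1) * Bq (M + 2) m p t x / m (x + 1) with hG
    have e1 : ∑ x ∈ range (M + 2),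
        (2 * Ar r t (x + 1) * (Bq (M + 2) m p t (x + 1) - Bq (M + 2) m p t x)) / m (x + 1)
        = ∑ x ∈ range (M + 2), (F x - G x) := by
      refine Finset.sum_congr rfl fun x _ => ?_
      rw [hF, hG]; ring
    have e2 : ∑ x ∈ range (M + 1),
        2 * Bq (M + 2) m p t (x + 1) *
          (Ar r t (x + 2) / m (x + 2) - Ar r t (x + 1) / m (x + 1))
        = ∑ x ∈ range (M + 1), (G (x + 1) - F x) := by
      refine Finset.sum_congr rfl fun x _ => ?_
      rw [hF, hG]
      show _ = 2 * Ar r t (x + 1 + 1) * Bq (M + 2) m p t (x + 1) / m (x + 1 + 1) - _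
      ring
    rw [e1, e2, Finset.sum_sub_distrib, Finset.sum_sub_distrib,
      Finset.sum_range_succ (fun x => F x) (M + 1),
      Finset.sum_range_succ' (fun x => G x) (M + 1)]
    have hFtop : F (M + 1) = 0 := by rw [hF]; simp [hBtop]
    have hG0 : G 0 = 0 := by rw [hG]; simp [hB0]
    rw [hFtop, hG0]
    ring
  rw [← hzero]
  exact hh

end Stmt2Aux
namespace Stmt2Aux

theorem lipAux {f : ℝ → ℝ} (hf : ContDiffOn ℝ 1 f (Set.Icc 0 1)) :
    ∃ K : ℝ, 0 ≤ K ∧ ∀ a ∈ Set.Icc (0:ℝ) 1, ∀ b ∈ Set.Icc (0:ℝ) 1,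
      |f b - f a| ≤ K * |b - a| := by
  have hu : UniqueDiffOn ℝ (Set.Icc (0:ℝ) 1) := uniqueDiffOn_Icc one_pos
  have hc : ContinuousOn (derivWithin f (Set.Icc 0 1)) (Set.Icc 0 1) :=
    hf.continuousOn_derivWithin hu le_rfl
  obtain ⟨K, hK⟩ := isCompact_Icc.exists_bound_of_continuousOn hc
  refine ⟨max K 0, le_max_right _ _, fun a ha b hb => ?_⟩
  have h := Convex.norm_image_sub_le_of_norm_derivWithin_le
    (hf.differentiableOn one_ne_zero)
    (fun x hx => (hK x hx).trans (le_max_left K 0)) (convex_Icc 0 1) ha hb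
  simpa [Real.norm_eq_abs] using h

theorem boundAux {f : ℝ → ℝ} (hf : ContinuousOn f (Set.Icc 0 1)) :
    ∃ M : ℝ, 0 ≤ M ∧ ∀ y ∈ Set.Icc (0:ℝ) 1, |f y| ≤ M := by
  obtain ⟨M, hM⟩ := isCompact_Icc.exists_bound_of_continuousOn hf
  exact ⟨max M 0, le_max_right _ _, fun y hy =>
    (Real.norm_eq_abs (f y) ▸ hM y hy).trans (le_max_left _ _)⟩

end Stmt2Aux
namespace Stmt2Aux

theorem teleCS (g : ℕ → ℝ) (x x' : ℕ) (h : x ≤ x') (E : ℝ)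
    (hsum : ∑ y ∈ Ico x x', (g (y + 1) - g y) ^ 2 ≤ E) :
    |g x' - g x| ≤ Real.sqrt ((x' - x : ℕ) * E) := by
  have htel : ∑ y ∈ Ico x x', (g (y + 1) - g y) = g x' - g x := by
    rw [Finset.sum_Ico_eq_sum_range]
    have h2 := Finset.sum_range_sub (fun i => g (x + i)) (x' - x)
    simpa [Nat.add_sub_cancel' h, add_assoc] using h2
  apply Real.le_sqrt_of_sq_le
  rw [sq_abs, ← htel]
  calc (∑ y ∈ Ico x x', (g (y + 1) - g y)) ^ 2
      ≤ (Ico x x').card * ∑ y ∈ Ico x x', (g (y + 1) - g y) ^ 2 :=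
        sq_sum_le_card_mul_sum_sq
    _ ≤ (x' - x : ℕ) * E := by
        rw [Nat.card_Ico]
        exact mul_le_mul_of_nonneg_left hsum (Nat.cast_nonneg _)

end Stmt2Aux
open Stmt2Aux in
/-- uniform Hölder-1/2 regularity and uniform boundedness of the averaged
fields `r̄` and `p̄/m`, uniformly in `N`, in the mass configuration and in time. -/
theorem stmt2 (β rr pp : ℝ → ℝ)
    (hβc : ContinuousOn β (Set.Icc 0 1)) (hβpos : ∀ y ∈ Set.Icc (0:ℝ) 1, 0 < β y)
    (hrrc : ContDiffOn ℝ 1 rr (Set.Icc 0 1)) (hrr0 : rr 0 = 0) (hrr1 : rr 1 = 0)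
    (hppc : ContDiffOn ℝ 1 pp (Set.Icc 0 1))
    (mminus mplus mbar : ℝ) (hm0 : 0 < mminus) (hmm : mminus ≤ mplus) (hmb : 0 < mbar) :
    ∃ C : ℝ, ∀ N : ℕ, 2 ≤ N → ∀ m : ℕ → ℝ,
      (∀ x : ℕ, m x ∈ Set.Icc mminus mplus) →
      ∀ r p : ℝ → ℕ → ℝ, IsChainSolution N m r p →
      (∀ x : ℕ, 1 ≤ x → x ≤ N - 1 → r 0 x = rr ((x : ℝ) / N)) →
      (∀ x : ℕ, 1 ≤ x → x ≤ N → p 0 x = m x * pp ((x : ℝ) / N) / mbar) →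
      ∀ s : ℝ, 0 ≤ s →
        (∀ x x' : ℕ, 1 ≤ x → x ≤ x' → x' ≤ N →
          ((x' ≤ N - 1 →
            |r s x' - r s x| ≤ C * Real.sqrt (((x' : ℝ) - (x : ℝ)) / N)) ∧
           |p s x' / m x' - p s x / m x| ≤ C * Real.sqrt (((x' : ℝ) - (x : ℝ)) / N))) ∧
        (∀ x : ℕ, 1 ≤ x → x ≤ N → |r s x| ≤ C ∧ |p s x| ≤ C) := by
  obtain ⟨Kr, hKr0, hKr⟩ := lipAux hrrc
  obtain ⟨Kp, hKp0, hKp⟩ := lipAux hppc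
  obtain ⟨Mp, hMp0, hMp⟩ := boundAux hppc.continuousOn
  set C₀ : ℝ := Kr ^ 2 / mminus + Kp ^ 2 / mbar ^ 2 with hC₀def
  have hC₀ : 0 ≤ C₀ := by positivity
  set Q1 : ℝ := (mplus * Mp / mbar + mplus * Real.sqrt C₀) / mminus with hQ1def
  set C : ℝ := Real.sqrt (mplus * C₀) + Real.sqrt C₀ + mplus * (Q1 + Real.sqrt C₀) with hCdef
  have hmplus : 0 < mplus := lt_of_lt_of_le hm0 hmm
  have hCr : Real.sqrt (mplus * C₀) ≤ C := by
    rw [hCdef]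
    have h1 : 0 ≤ Real.sqrt C₀ := Real.sqrt_nonneg _
    have h2 : 0 ≤ Q1 := by rw [hQ1def]; positivity
    nlinarith [Real.sqrt_nonneg (mplus * C₀)]
  have hCq : Real.sqrt C₀ ≤ C := by
    rw [hCdef]
    have h2 : 0 ≤ Q1 := by rw [hQ1def]; positivity
    nlinarith [Real.sqrt_nonneg (mplus * C₀), Real.sqrt_nonneg C₀]
  have hCp : mplus * (Q1 + Real.sqrt C₀) ≤ C := by
    rw [hCdef]
    nlinarith [Real.sqrt_nonneg (mplus * C₀), Real.sqrt_nonneg C₀]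
  refine ⟨C, ?_⟩
  intro N hN m hm r p hsol hr0 hp0 s hs
  have hNpos : (0:ℝ) < N := by positivity
  have hmpos : ∀ x, 0 < m x := fun x => lt_of_lt_of_le hm0 (hm x).1
  have hmne : ∀ x, m x ≠ 0 := fun x => (hmpos x).ne'
  -- membership of grid points
  have hmem : ∀ x : ℕ, x ≤ N → ((x:ℝ)/N) ∈ Set.Icc (0:ℝ) 1 := fun x hx =>
    ⟨by positivity, by rw [div_le_one hNpos]; exact_mod_cast hx⟩
  -- initial data identities
  have hr0N : ∀ x : ℕ, x ≤ N → r 0 x = rr ((x:ℝ)/N) := by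
    intro x hx
    rcases Nat.eq_zero_or_pos x with h0 | h1
    · subst h0; simp [hsol.1 0, hrr0]
    · rcases eq_or_lt_of_le hx with hxN | hxN
      · subst hxN
        rw [hsol.2.1 0, div_self hNpos.ne', hrr1]
      · exact hr0 x h1 (by omega)
  have hq0 : ∀ x : ℕ, 1 ≤ x → x ≤ N → p 0 x / m x = pp ((x:ℝ)/N) / mbar := by
    intro x h1 h2
    rw [hp0 x h1 h2, mul_div_assoc, mul_div_cancel_left₀ _ (hmne x)]
  -- bound on initial Dirichlet energy
  have hAr0 : ∀ x : ℕ, x < N → |Ar r 0 (x + 1)| ≤ Kr / N := by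
    intro x hx
    have e1 : r 0 (x + 1) = rr (((x + 1 : ℕ) : ℝ) / N) := hr0N _ (by omega)
    have e2 : r 0 x = rr ((x : ℝ) / N) := hr0N _ (by omega)
    have hAe : Ar r 0 (x + 1) = rr (((x + 1 : ℕ) : ℝ) / N) - rr ((x : ℝ) / N) := by
      rw [Ar, Nat.add_sub_cancel, e1, e2]
    rw [hAe]
    have h := hKr _ (hmem x (by omega)) _ (hmem (x + 1) (by omega))
    have habs : |((x + 1 : ℕ) : ℝ) / N - (x : ℝ) / N| = 1 / N := by
      have : ((x + 1 : ℕ) : ℝ) / N - (x : ℝ) / N = 1 / N := by push_cast; ring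
      rw [this, abs_of_nonneg (by positivity)]
    rw [habs] at h
    calc |rr (((x + 1 : ℕ) : ℝ) / N) - rr ((x : ℝ) / N)| ≤ Kr * (1 / N) := h
      _ = Kr / N := by ring
  have hBq0 : ∀ x : ℕ, x < N - 1 → |Bq N m p 0 (x + 1)| ≤ Kp / (mbar * N) := by
    intro x hx
    have hBe : Bq N m p 0 (x + 1) =
        (pp (((x + 2 : ℕ) : ℝ) / N) - pp (((x + 1 : ℕ) : ℝ) / N)) / mbar := by
      rw [Bq, if_pos ⟨by omega, by omega⟩]
      rw [show x + 1 + 1 = x + 2 from rfl]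
      rw [hq0 (x + 2) (by omega) (by omega), hq0 (x + 1) (by omega) (by omega)]
      ring
    rw [hBe, abs_div, abs_of_pos hmb]
    have h := hKp _ (hmem (x + 1) (by omega)) _ (hmem (x + 2) (by omega))
    have habs : |((x + 2 : ℕ) : ℝ) / N - ((x + 1 : ℕ) : ℝ) / N| = 1 / N := by
      have : ((x + 2 : ℕ) : ℝ) / N - ((x + 1 : ℕ) : ℝ) / N = 1 / N := by push_cast; ring
      rw [this, abs_of_nonneg (by positivity)]
    rw [habs] at h
    calc |pp (((x + 2 : ℕ) : ℝ) / N) - pp (((x + 1 : ℕ) : ℝ) / N)| / mbar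
        ≤ Kp * (1 / N) / mbar := (div_le_div_iff_of_pos_right hmb).mpr h
      _ = Kp / (mbar * N) := by rw [mul_one_div, div_div, mul_comm (N:ℝ) mbar]
  have hD0 : Dfun N m r p 0 ≤ C₀ / N := by
    have hSA0 : ∑ x ∈ range N, (Ar r 0 (x + 1)) ^ 2 / m (x + 1) ≤ Kr ^ 2 / mminus / N := by
      have hterm : ∀ x ∈ range N, (Ar r 0 (x + 1)) ^ 2 / m (x + 1) ≤ (Kr / N) ^ 2 / mminus := by
        intro x hx
        apply div_le_div₀ (by positivity) ?_ hm0 (hm _).1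
        rw [← sq_abs]
        exact pow_le_pow_left₀ (abs_nonneg _) (hAr0 x (mem_range.mp hx)) 2
      calc ∑ x ∈ range N, (Ar r 0 (x + 1)) ^ 2 / m (x + 1)
          ≤ ∑ _x ∈ range N, (Kr / N) ^ 2 / mminus := Finset.sum_le_sum hterm
        _ = N * ((Kr / N) ^ 2 / mminus) := by
            rw [Finset.sum_const, card_range, nsmul_eq_mul]
        _ = Kr ^ 2 / mminus / N := by field_simp
    have hSB0 : ∑ x ∈ range (N - 1), (Bq N m p 0 (x + 1)) ^ 2 ≤ Kp ^ 2 / mbar ^ 2 / N := by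
      have hterm : ∀ x ∈ range (N - 1), (Bq N m p 0 (x + 1)) ^ 2 ≤ (Kp / (mbar * N)) ^ 2 := by
        intro x hx
        rw [← sq_abs]
        exact pow_le_pow_left₀ (abs_nonneg _) (hBq0 x (mem_range.mp hx)) 2
      calc ∑ x ∈ range (N - 1), (Bq N m p 0 (x + 1)) ^ 2
          ≤ ∑ _x ∈ range (N - 1), (Kp / (mbar * N)) ^ 2 := Finset.sum_le_sum hterm
        _ = ((N - 1 : ℕ) : ℝ) * (Kp / (mbar * N)) ^ 2 := by
            rw [Finset.sum_const, card_range, nsmul_eq_mul]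
        _ ≤ (N : ℝ) * (Kp / (mbar * N)) ^ 2 := by
            apply mul_le_mul_of_nonneg_right _ (by positivity)
            exact_mod_cast Nat.sub_le N 1
        _ = Kp ^ 2 / mbar ^ 2 / N := by field_simp
    calc Dfun N m r p 0
        ≤ Kr ^ 2 / mminus / N + Kp ^ 2 / mbar ^ 2 / N := add_le_add hSA0 hSB0
      _ = C₀ / N := by rw [hC₀def]; ring
  -- energy at time s
  have hDs : Dfun N m r p s ≤ C₀ / N := (Dconst N m r p hN hsol s).le.trans hD0
  have hSA : 0 ≤ ∑ x ∈ range N, (Ar r s (x + 1)) ^ 2 / m (x + 1) := by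
    exact Finset.sum_nonneg fun x _ => div_nonneg (sq_nonneg _) (hmpos _).le
  have hSB : 0 ≤ ∑ x ∈ range (N - 1), (Bq N m p s (x + 1)) ^ 2 := by
    apply Finset.sum_nonneg; intro x _; positivity
  have hDs' : ∑ x ∈ range N, (Ar r s (x + 1)) ^ 2 / m (x + 1) +
      ∑ x ∈ range (N - 1), (Bq N m p s (x + 1)) ^ 2 ≤ C₀ / N := hDs
  have hSA' : ∑ x ∈ range N, (Ar r s (x + 1)) ^ 2 ≤ mplus * C₀ / N := by
    have h1 : ∑ x ∈ range N, (Ar r s (x + 1)) ^ 2 ≤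
        mplus * ∑ x ∈ range N, (Ar r s (x + 1)) ^ 2 / m (x + 1) := by
      rw [Finset.mul_sum]
      refine Finset.sum_le_sum fun x _ => ?_
      calc (Ar r s (x + 1)) ^ 2 ≤ mplus * (Ar r s (x + 1)) ^ 2 / m (x + 1) := by
            rw [le_div_iff₀ (hmpos (x + 1))]
            nlinarith [sq_nonneg (Ar r s (x + 1)), (hm (x + 1)).2, (hmpos (x + 1))]
        _ = mplus * ((Ar r s (x + 1)) ^ 2 / m (x + 1)) := mul_div_assoc _ _ _
    calc ∑ x ∈ range N, (Ar r s (x + 1)) ^ 2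
        ≤ mplus * ∑ x ∈ range N, (Ar r s (x + 1)) ^ 2 / m (x + 1) := h1
      _ ≤ mplus * (C₀ / N) := by
          apply mul_le_mul_of_nonneg_left _ hmplus.le
          linarith [hSB]
      _ = mplus * C₀ / N := (mul_div_assoc _ _ _).symm
  have hSB' : ∑ x ∈ range (N - 1), (Bq N m p s (x + 1)) ^ 2 ≤ C₀ / N := by
    linarith [hSA]
  -- Hölder estimate for r (valid up to x' ≤ N)
  have hHr : ∀ x x' : ℕ, x ≤ x' → x' ≤ N →
      |r s x' - r s x| ≤ Real.sqrt (mplus * C₀) * Real.sqrt (((x':ℝ) - x) / N) := by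
    intro x x' hxx hx'N
    have hsum : ∑ y ∈ Ico x x', (r s (y + 1) - r s y) ^ 2 ≤ mplus * C₀ / N := by
      have he : ∑ y ∈ Ico x x', (r s (y + 1) - r s y) ^ 2 =
          ∑ y ∈ Ico x x', (Ar r s (y + 1)) ^ 2 := by
        refine Finset.sum_congr rfl fun y _ => ?_
        rw [Ar, Nat.add_sub_cancel]
      rw [he]
      refine le_trans ?_ hSA'
      apply Finset.sum_le_sum_of_subset_of_nonneg
      · intro y hy
        rw [mem_range]
        rw [mem_Ico] at hy
        omega
      · intro y _ _; positivity
    have h := teleCS (fun y => r s y) x x' hxx _ hsum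
    refine le_trans h (le_of_eq ?_)
    rw [Nat.cast_sub hxx,
      show ((x':ℝ) - x) * (mplus * C₀ / N) = (mplus * C₀) * (((x':ℝ) - x) / N) by ring,
      Real.sqrt_mul (by positivity)]
  -- Hölder estimate for q = p/m
  have hHq : ∀ x x' : ℕ, 1 ≤ x → x ≤ x' → x' ≤ N →
      |p s x' / m x' - p s x / m x| ≤ Real.sqrt C₀ * Real.sqrt (((x':ℝ) - x) / N) := by
    intro x x' hx1 hxx hx'N
    have hsum : ∑ y ∈ Ico x x', (p s (y + 1) / m (y + 1) - p s y / m y) ^ 2 ≤ C₀ / N := by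
      have he : ∑ y ∈ Ico x x', (p s (y + 1) / m (y + 1) - p s y / m y) ^ 2 =
          ∑ y ∈ Ico x x', (Bq N m p s y) ^ 2 := by
        refine Finset.sum_congr rfl fun y hy => ?_
        rw [mem_Ico] at hy
        rw [Bq, if_pos ⟨by omega, by omega⟩]
      rw [he]
      have he2 : ∑ y ∈ range (N - 1), (Bq N m p s (y + 1)) ^ 2 =
          ∑ y ∈ Ico 1 N, (Bq N m p s y) ^ 2 := by
        rw [Finset.sum_Ico_eq_sum_range]
        refine Finset.sum_congr rfl fun i _ => by rw [Nat.add_comm]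
      rw [he2] at hSB'
      refine le_trans ?_ hSB'
      apply Finset.sum_le_sum_of_subset_of_nonneg
      · intro y hy
        rw [mem_Ico] at hy ⊢
        omega
      · intro y _ _; positivity
    have h := teleCS (fun y => p s y / m y) x x' hxx _ hsum
    refine le_trans h (le_of_eq ?_)
    rw [Nat.cast_sub hxx,
      show ((x':ℝ) - x) * (C₀ / N) = C₀ * (((x':ℝ) - x) / N) by ring,
      Real.sqrt_mul hC₀]
  -- uniform bound for r
  have hRb : ∀ x : ℕ, x ≤ N → |r s x| ≤ Real.sqrt (mplus * C₀) := by
    intro x hxN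
    have h := hHr 0 x (Nat.zero_le _) hxN
    rw [hsol.1 s] at h
    simp only [Nat.cast_zero, sub_zero] at h
    refine h.trans ?_
    apply mul_le_of_le_one_right (Real.sqrt_nonneg _)
    rw [Real.sqrt_le_one]
    rw [div_le_one hNpos]
    exact_mod_cast hxN
  -- uniform bound for p
  have hqh : ∀ x : ℕ, 1 ≤ x → x ≤ N → |p s x / m x - p s 1 / m 1| ≤ Real.sqrt C₀ := by
    intro x h1 h2
    have h := hHq 1 x le_rfl h1 h2
    refine h.trans ?_
    apply mul_le_of_le_one_right (Real.sqrt_nonneg _)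
    rw [Real.sqrt_le_one, div_le_one hNpos]
    have : (x : ℝ) ≤ N := by exact_mod_cast h2
    linarith
  have hPb : ∀ x : ℕ, 1 ≤ x → x ≤ N → |p s x| ≤ mplus * (Q1 + Real.sqrt C₀) := by
    have hP := Pconst N m r p hN hsol s
    have hP0 : |∑ i ∈ range N, p 0 (i + 1)| ≤ N * (mplus * Mp / mbar) := by
      refine (Finset.abs_sum_le_sum_abs _ _).trans ?_
      have hterm : ∀ i ∈ range N, |p 0 (i + 1)| ≤ mplus * Mp / mbar := by
        intro i hi
        rw [mem_range] at hi
        rw [hp0 (i + 1) (by omega) (by omega), abs_div, abs_mul, abs_of_pos hmb]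
        have h1 : |m (i + 1)| ≤ mplus := by
          rw [abs_of_pos (hmpos _)]; exact (hm _).2
        have h2 : |pp (((i + 1 : ℕ) : ℝ) / N)| ≤ Mp := hMp _ (hmem _ (by omega))
        apply div_le_div₀ (by positivity) _ hmb le_rfl
        exact mul_le_mul h1 h2 (abs_nonneg _) hmplus.le
      calc ∑ i ∈ range N, |p 0 (i + 1)| ≤ ∑ _i ∈ range N, mplus * Mp / mbar :=
            Finset.sum_le_sum hterm
        _ = N * (mplus * Mp / mbar) := by rw [Finset.sum_const, card_range, nsmul_eq_mul]
    set q1 : ℝ := p s 1 / m 1 with hq1def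
    have hiden : ∑ i ∈ range N, m (i + 1) * (p s (i + 1) / m (i + 1) - q1) =
        (∑ i ∈ range N, p s (i + 1)) - (∑ i ∈ range N, m (i + 1)) * q1 := by
      rw [Finset.sum_mul, ← Finset.sum_sub_distrib]
      refine Finset.sum_congr rfl fun i _ => ?_
      rw [mul_sub, mul_div_cancel₀ _ (hmne (i + 1))]
    have hAbound : |∑ i ∈ range N, m (i + 1) * (p s (i + 1) / m (i + 1) - q1)| ≤
        N * (mplus * Real.sqrt C₀) := by
      refine (Finset.abs_sum_le_sum_abs _ _).trans ?_
      have hterm : ∀ i ∈ range N, |m (i + 1) * (p s (i + 1) / m (i + 1) - q1)| ≤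
          mplus * Real.sqrt C₀ := by
        intro i hi
        rw [mem_range] at hi
        rw [abs_mul, abs_of_pos (hmpos _)]
        exact mul_le_mul (hm _).2 (hqh (i + 1) (by omega) (by omega)) (abs_nonneg _) hmplus.le
      calc ∑ i ∈ range N, |m (i + 1) * (p s (i + 1) / m (i + 1) - q1)|
          ≤ ∑ _i ∈ range N, mplus * Real.sqrt C₀ := Finset.sum_le_sum hterm
        _ = N * (mplus * Real.sqrt C₀) := by rw [Finset.sum_const, card_range, nsmul_eq_mul]
    have hSm : (N : ℝ) * mminus ≤ ∑ i ∈ range N, m (i + 1) := by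
      calc (N : ℝ) * mminus = ∑ _i ∈ range N, mminus := by
            rw [Finset.sum_const, card_range, nsmul_eq_mul]
        _ ≤ ∑ i ∈ range N, m (i + 1) := Finset.sum_le_sum fun i _ => (hm _).1
    have hq1b : |q1| ≤ Q1 := by
      have hkey : (∑ i ∈ range N, m (i + 1)) * |q1| ≤
          N * (mplus * Mp / mbar) + N * (mplus * Real.sqrt C₀) := by
        have h1 : |(∑ i ∈ range N, m (i + 1)) * q1| ≤
            N * (mplus * Mp / mbar) + N * (mplus * Real.sqrt C₀) := by
          have heq : (∑ i ∈ range N, m (i + 1)) * q1 =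
              (∑ i ∈ range N, p s (i + 1)) -
                ∑ i ∈ range N, m (i + 1) * (p s (i + 1) / m (i + 1) - q1) := by
            rw [hiden]; ring
          rw [heq]
          refine (abs_sub _ _).trans ?_
          rw [hP]
          exact add_le_add hP0 hAbound
        rwa [abs_mul, abs_of_nonneg ((mul_nonneg hNpos.le hm0.le).trans hSm)] at h1
      rw [hQ1def, le_div_iff₀ hm0]
      have h2 : (N : ℝ) * mminus * |q1| ≤ N * (mplus * Mp / mbar) + N * (mplus * Real.sqrt C₀) := by
        refine le_trans ?_ hkey
        exact mul_le_mul_of_nonneg_right hSm (abs_nonneg _)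
      have h3 : (N : ℝ) * (mminus * |q1|) ≤
          (N : ℝ) * (mplus * Mp / mbar + mplus * Real.sqrt C₀) := by
        ring_nf
        ring_nf at h2
        linarith
      have h4 := le_of_mul_le_mul_left h3 hNpos
      linarith
    intro x h1 h2
    have hqx : |p s x / m x| ≤ Q1 + Real.sqrt C₀ := by
      have := hqh x h1 h2
      calc |p s x / m x| ≤ |q1| + |p s x / m x - q1| := by
            have := abs_sub_abs_le_abs_sub (p s x / m x) q1
            have h3 := abs_nonneg (p s x / m x - q1)
            linarith [abs_sub_abs_le_abs_sub (p s x / m x) q1]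
        _ ≤ Q1 + Real.sqrt C₀ := add_le_add hq1b (hqh x h1 h2)
    have hpx : p s x = m x * (p s x / m x) := by
      rw [mul_div_cancel₀ _ (hmne x)]
    rw [hpx, abs_mul, abs_of_pos (hmpos x)]
    exact mul_le_mul (hm _).2 hqx (abs_nonneg _) hmplus.le
  constructor
  · intro x x' hx1 hxx hx'N
    have hsq : 0 ≤ Real.sqrt (((x':ℝ) - x) / N) := Real.sqrt_nonneg _
    exact ⟨fun _ => (hHr x x' hxx hx'N).trans (mul_le_mul_of_nonneg_right hCr hsq),
      (hHq x x' hx1 hxx hx'N).trans (mul_le_mul_of_nonneg_right hCq hsq)⟩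
  · intro x hx1 hxN
    exact ⟨(hRb x hxN).trans hCr, (hPb x hx1 hxN).trans hCp⟩
end
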